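/- Let p > 0, r > 0, and let v : [0, S] → ℝ be differentiable with |v(s)| < p^{1/2} for all s, and suppose v'(s) ≥ (p − v(s)²)/(r + 2 s p^{1/2}) for all s ∈ [0,S]. Then for all s ∈ [0,S]: artanh(v(s)/p^{1/2}) ≥ artanh(v(0)/p^{1/2}) + (1/2) log(1 + 2 s p^{1/2}/r). -/

import Mathlib

/-- The inverse hyperbolic tangent on `(-1, 1)`. -/
noncomputable def artanh (x : ℝ) : ℝ := (1/2) * Real.log ((1 + x) / (1 - x))

theorem stmt_18 (p r S : ℝ) (hp : 0 < p) (hr : 0 < r) (hS : 0 ≤ S)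
    (v v' : ℝ → ℝ)
    (hderiv : ∀ s ∈ Set.Icc 0 S, HasDerivAt v (v' s) s)
    (hbound : ∀ s ∈ Set.Icc 0 S, |v s| < Real.sqrt p)
    (hineq : ∀ s ∈ Set.Icc 0 S, (p - (v s)^2) / (r + 2*s*Real.sqrt p) ≤ v' s) :
    ∀ s ∈ Set.Icc 0 S,
      artanh (v 0 / Real.sqrt p) + (1/2) * Real.log (1 + 2*s*Real.sqrt p / r)
        ≤ artanh (v s / Real.sqrt p) := by
  intro s hs
  have hq : 0 < Real.sqrt p := Real.sqrt_pos.mpr hp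
  set q := Real.sqrt p with hqdef
  have hp2 : q ^ 2 = p := Real.sq_sqrt hp.le
  set F : ℝ → ℝ := fun t => artanh (v t / q) - (1/2) * Real.log (1 + 2*t*q / r) with hF
  -- basic facts at each point of Icc
  have hfacts : ∀ x ∈ Set.Icc (0:ℝ) S,
      0 < p - (v x)^2 ∧ 0 < r + 2*x*q ∧ 0 < 1 - v x / q ∧ 0 < 1 + v x / q := by
    intro x hx
    have hb := hbound x hx
    have habs := abs_lt.mp hb
    have h1 : (v x)^2 < p := by nlinarith [habs.1, habs.2]
    have h2 : 0 ≤ x := hx.1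
    refine ⟨by linarith, by nlinarith, ?_, ?_⟩
    · rw [sub_pos, div_lt_one hq]; exact habs.2
    · have : -1 < v x / q := by
        rw [neg_lt, ← neg_div]; rw [div_lt_one hq]; linarith [habs.1]
      linarith
  have key : ∀ x ∈ Set.Icc (0:ℝ) S,
      HasDerivAt F (q * v' x / (p - (v x)^2) - q / (r + 2*x*q)) x := by
    intro x hx
    obtain ⟨hpv, hrx, hD, hN⟩ := hfacts x hx
    have hg : HasDerivAt (fun t => v t / q) (v' x / q) x := (hderiv x hx).div_const q
    have hNd : HasDerivAt (fun t => 1 + v t / q) (v' x / q) x := by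
      exact hg.const_add 1
    have hDd : HasDerivAt (fun t => 1 - v t / q) (-(v' x / q)) x := by
      exact hg.const_sub 1
    have hquot : HasDerivAt (fun t => (1 + v t / q) / (1 - v t / q))
        ((v' x / q * (1 - v x / q) - (1 + v x / q) * (-(v' x / q))) / (1 - v x / q) ^ 2) x :=
      hNd.div hDd hD.ne'
    have hpos : 0 < (1 + v x / q) / (1 - v x / q) := div_pos hN hD
    have hlog1 : HasDerivAt (fun t => Real.log ((1 + v t / q) / (1 - v t / q)))
        (((v' x / q * (1 - v x / q) - (1 + v x / q) * (-(v' x / q))) / (1 - v x / q) ^ 2)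
          / ((1 + v x / q) / (1 - v x / q))) x := hquot.log hpos.ne'
    have h2pos : 0 < 1 + 2*x*q / r := by
      have : 0 ≤ 2*x*q / r :=
        div_nonneg (mul_nonneg (mul_nonneg (by norm_num) hx.1) hq.le) hr.le
      linarith
    have hlin : HasDerivAt (fun t => 1 + 2*t*q / r) (2*q / r) x := by
      have : HasDerivAt (fun t : ℝ => 2*t*q / r) (2*q / r) x := by
        have := (hasDerivAt_id x).const_mul (2*q/r)
        simpa [mul_comm, mul_assoc, mul_div_assoc, mul_left_comm] using this
      exact this.const_add 1
    have hlog2 : HasDerivAt (fun t => Real.log (1 + 2*t*q / r)) ((2*q / r) / (1 + 2*x*q / r)) x :=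
      hlin.log h2pos.ne'
    have hcomb := (hlog1.const_mul (1/2 : ℝ)).sub (hlog2.const_mul (1/2 : ℝ))
    have hFeq : F = fun t => (1/2) * Real.log ((1 + v t / q) / (1 - v t / q))
        - (1/2) * Real.log (1 + 2*t*q / r) := by
      funext t; simp [hF, artanh]
    rw [hFeq]
    convert hcomb using 1
    · rfl
    · rfl
    · rfl
    have h6 : q^2 - v x ^ 2 ≠ 0 := by rw [hp2]; exact hpv.ne'
    have h7 : r + 2*x*q ≠ 0 := hrx.ne'
    have e1 : (v' x / q * (1 - v x / q) - (1 + v x / q) * -(v' x / q)) / (1 - v x / q) ^ 2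
        / ((1 + v x / q) / (1 - v x / q)) = 2 * (q * v' x) / (q^2 - (v x)^2) := by
      rw [div_div_div_eq]
      rw [div_eq_div_iff (mul_ne_zero (pow_ne_zero 2 hD.ne') hN.ne') h6]
      field_simp
      ring
    rw [e1, ← hp2]
    field_simp
  -- monotonicity of F on Icc 0 S
  have hmono : MonotoneOn F (Set.Icc 0 S) := by
    apply monotoneOn_of_deriv_nonneg (convex_Icc 0 S)
    · exact fun x hx => (key x hx).continuousAt.continuousWithinAt
    · intro x hx
      rw [interior_Icc] at hx
      exact (key x (Set.mem_Icc_of_Ioo hx)).differentiableAt.differentiableWithinAt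
    · intro x hx
      rw [interior_Icc] at hx
      have hx' := Set.mem_Icc_of_Ioo hx
      rw [(key x hx').deriv]
      obtain ⟨hpv, hrx, _, _⟩ := hfacts x hx'
      have hi := hineq x hx'
      rw [div_le_iff₀ hrx] at hi
      rw [sub_nonneg, div_le_div_iff₀ hrx hpv]
      nlinarith
  have h0 : (0:ℝ) ∈ Set.Icc (0:ℝ) S := Set.mem_Icc.mpr ⟨le_refl 0, hS⟩
  have := hmono h0 hs hs.1
  simp only [hF] at this
  norm_num at this
  linarith
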